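/- For every positive integer k, gr_k(K_3 : P_4) = k + 3: every k-edge-coloring of K_{k+3} contains a rainbow triangle or a monochromatic path on 4 vertices, and there exists a k-edge-coloring of K_{k+2} containing neither. -/

import Mathlib

def RainbowTri {V : Type} {k : ℕ} (Adj : V → V → Prop) (c : V → V → Fin k) : Prop :=
  ∃ a b d : V, Adj a b ∧ Adj a d ∧ Adj b d ∧
    c a b ≠ c a d ∧ c a b ≠ c b d ∧ c a d ≠ c b d

def MonoTri {V : Type} {k : ℕ} (Adj : V → V → Prop) (c : V → V → Fin k) : Prop :=
  ∃ a b d : V, a ≠ b ∧ a ≠ d ∧ b ≠ d ∧ Adj a b ∧ Adj a d ∧ Adj b d ∧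
    c a b = c a d ∧ c a d = c b d

def MonoP4 {V : Type} {k : ℕ} (Adj : V → V → Prop) (c : V → V → Fin k) : Prop :=
  ∃ a b d e : V, a ≠ b ∧ a ≠ d ∧ a ≠ e ∧ b ≠ d ∧ b ≠ e ∧ d ≠ e ∧
    Adj a b ∧ Adj b d ∧ Adj d e ∧ c a b = c b d ∧ c b d = c d e

def MonoC4 {V : Type} {k : ℕ} (Adj : V → V → Prop) (c : V → V → Fin k) : Prop :=
  ∃ a b d e : V, a ≠ b ∧ a ≠ d ∧ a ≠ e ∧ b ≠ d ∧ b ≠ e ∧ d ≠ e ∧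
    Adj a b ∧ Adj b d ∧ Adj d e ∧ Adj e a ∧
    c a b = c b d ∧ c b d = c d e ∧ c d e = c e a

def MonoClique {V : Type} {k : ℕ} [DecidableEq V] (Adj : V → V → Prop)
    (c : V → V → Fin k) (p : ℕ) (i : Fin k) : Prop :=
  ∃ S : Finset V, S.card = p ∧ ∀ a ∈ S, ∀ b ∈ S, a ≠ b → Adj a b ∧ c a b = i

def MonoStar {V : Type} {k : ℕ} [DecidableEq V] (Adj : V → V → Prop)
    (c : V → V → Fin k) (m : ℕ) (i : Fin k) : Prop :=
  ∃ v : V, ∃ S : Finset V, S.card = m ∧ v ∉ S ∧ ∀ u ∈ S, Adj v u ∧ c v u = i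

def Full {V : Type} : V → V → Prop := fun a b => a ≠ b

def OAdj {m : ℕ} (A : Finset (Fin m)) : Option (Fin m) → Option (Fin m) → Prop
  | some i, some j => i ≠ j
  | some i, none   => i ∈ A
  | none,   some j => j ∈ A
  | none,   none   => False

def IsGallaiPartition {n k q : ℕ} (c : Fin n → Fin n → Fin k)
    (P : Fin q → Finset (Fin n)) : Prop :=
  2 ≤ q ∧ (∀ i, (P i).Nonempty) ∧ (∀ i j, i ≠ j → Disjoint (P i) (P j)) ∧
  (∀ x : Fin n, ∃ i, x ∈ P i) ∧
  (∀ i j, i ≠ j → ∃ col : Fin k, ∀ a ∈ P i, ∀ b ∈ P j, c a b = col) ∧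
  (∃ c1 c2 : Fin k, ∀ i j, i ≠ j → ∀ a ∈ P i, ∀ b ∈ P j, c a b = c1 ∨ c a b = c2)

def MonoCopy {W V : Type} {k : ℕ} (H : SimpleGraph W) (Adj : V → V → Prop)
    (c : V → V → Fin k) (i : Fin k) : Prop :=
  ∃ φ : W → V, Function.Injective φ ∧
    ∀ a b, H.Adj a b → Adj (φ a) (φ b) ∧ c (φ a) (φ b) = i

def MonoMergeCopy {W V : Type} {k : ℕ} (H : SimpleGraph W)
    (c : V → V → Fin k) (i : Fin k) : Prop :=
  ∃ φ : W → V, ∀ a b, H.Adj a b → φ a ≠ φ b ∧ c (φ a) (φ b) = i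

lemma key {N k : ℕ} (c : Fin N → Fin N → Fin k) (hsym : ∀ a b, c a b = c b a) :
    ∀ S : Finset (Fin N),
      (∀ a ∈ S, ∀ b ∈ S, ∀ d ∈ S, a ≠ b → a ≠ d → b ≠ d →
        c a b = c a d ∨ c a b = c b d ∨ c a d = c b d) →
      (∀ a ∈ S, ∀ b ∈ S, ∀ d ∈ S, ∀ e ∈ S, a ≠ b → a ≠ d → a ≠ e → b ≠ d → b ≠ e → d ≠ e →
        ¬(c a b = c b d ∧ c b d = c d e)) →
      S.card ≤ (S.offDiag.image fun p => c p.1 p.2).card + 2 := by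
  intro S
  induction S using Finset.strongInduction with
  | _ S ih =>
    intro hR hP
    set C := S.offDiag.image fun p => c p.1 p.2 with hCdef
    have hmemC : ∀ x ∈ S, ∀ y ∈ S, x ≠ y → c x y ∈ C := by
      intro x hx y hy hxy
      exact Finset.mem_image.mpr ⟨(x, y), Finset.mem_offDiag.mpr ⟨hx, hy, hxy⟩, rfl⟩
    rcases S.eq_empty_or_nonempty with rfl | ⟨v, hv⟩
    · simp
    by_cases hrep : ∃ a ∈ S.erase v, ∃ b ∈ S.erase v, a ≠ b ∧ c v a = c v b
    case neg =>
      -- the map x ↦ c v x is injective on S.erase v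
      have hinj : Set.InjOn (fun x => c v x) (S.erase v) := by
        intro x hx y hy hxy
        by_contra hne
        exact hrep ⟨x, Finset.mem_coe.mp hx, y, Finset.mem_coe.mp hy, hne, hxy⟩
      have h1 : (S.erase v).card ≤ C.card := by
        apply Finset.card_le_card_of_injOn _ _ hinj
        intro x hx
        exact hmemC v hv x (Finset.mem_of_mem_erase hx) (Ne.symm (Finset.ne_of_mem_erase hx))
      have h2 := Finset.card_erase_of_mem hv
      omega
    case pos =>
    obtain ⟨a, ha, b, hb, hab, hcab⟩ := hrep
    set red := c v a with hred
    set L := (S.erase v).filter (fun x => c v x = red) with hLdef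
    have hLmem : ∀ x ∈ L, x ∈ S ∧ x ≠ v ∧ c v x = red := by
      intro x hx
      have h1 := Finset.mem_filter.mp hx
      have h2 := Finset.mem_erase.mp h1.1
      exact ⟨h2.2, h2.1, h1.2⟩
    have haL : a ∈ L := Finset.mem_filter.mpr ⟨ha, rfl⟩
    have hbL : b ∈ L := Finset.mem_filter.mpr ⟨hb, hcab.symm⟩
    have hLsub : L ⊆ S.erase v := Finset.filter_subset _ _
    have hLS : L ⊆ S := hLsub.trans (Finset.erase_subset _ _)
    have hvL : v ∉ L := fun h => (hLmem v h).2.1 rfl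
    have hL1 : 1 < L.card := Finset.one_lt_card.mpr ⟨a, haL, b, hbL, hab⟩
    have hredC : red ∈ C := hmemC v hv a (hLmem a haL).1 (Ne.symm (hLmem a haL).2.1)
    by_cases hA : ∃ x ∈ L, ∃ y ∈ L, x ≠ y ∧ c x y = red
    case pos =>
      obtain ⟨x, hx, y, hy, hxy, hcxy⟩ := hA
      obtain ⟨hxS, hxv, hcvx⟩ := hLmem x hx
      obtain ⟨hyS, hyv, hcvy⟩ := hLmem y hy
      by_cases hL3 : 3 ≤ L.card
      · -- find z ∈ L distinct from x, y: mono P4 z v x y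
        have hz : ∃ z ∈ L, z ≠ x ∧ z ≠ y := by
          by_contra h
          push_neg at h
          have hsub : L ⊆ {x, y} := by
            intro z hzL
            rcases em (z = x) with rfl | hzx
            · exact Finset.mem_insert_self _ _
            · simp [h z hzL hzx]
          have := Finset.card_le_card hsub
          have : ({x, y} : Finset (Fin N)).card ≤ 2 := Finset.card_insert_le _ _ |>.trans (by simp)
          omega
        obtain ⟨z, hz, hzx, hzy⟩ := hz
        obtain ⟨hzS, hzv, hcvz⟩ := hLmem z hz
        exact absurd ⟨by rw [hsym z v, hcvz, hcvx], by rw [hcvx, hcxy]⟩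
          (hP z hzS v hv x hxS y hyS hzv hzx hzy (Ne.symm hxv) (Ne.symm hyv) hxy)
      · -- L = {x, y}: triangle case
        have hL2 : L.card = 2 := by omega
        have hLxy : L = {x, y} := by
          have hsub : ({x, y} : Finset (Fin N)) ⊆ L := by
            intro z hz
            rcases Finset.mem_insert.mp hz with rfl | hz
            · exact hx
            · rwa [Finset.mem_singleton.mp hz]
          have hcard2 : ({x, y} : Finset (Fin N)).card = 2 := Finset.card_pair hxy
          exact (Finset.eq_of_subset_of_card_le hsub (by omega)).symm
        set O := (S.erase v) \ L with hOdef
        have hOmem : ∀ w ∈ O, w ∈ S ∧ w ≠ v ∧ c v w ≠ red ∧ w ≠ x ∧ w ≠ y := by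
          intro w hw
          have h1 := Finset.mem_sdiff.mp hw
          have h2 := Finset.mem_erase.mp h1.1
          have h3 : c v w ≠ red := fun h => h1.2 (Finset.mem_filter.mpr ⟨h1.1, h⟩)
          have h4 : w ≠ x := fun h => h1.2 (h ▸ hx)
          have h5 : w ≠ y := fun h => h1.2 (h ▸ hy)
          exact ⟨h2.2, h2.1, h3, h4, h5⟩
        have hwx : ∀ w ∈ O, c w x ≠ red := by
          intro w hw h
          obtain ⟨hwS, hwv, _, hwxne, hwy⟩ := hOmem w hw
          exact hP w hwS x hxS v hv y hyS hwxne hwv hwy hxv hxy (Ne.symm hyv)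
            ⟨by rw [h, hsym x v, hcvx], by rw [hsym x v, hcvx, hcvy]⟩
        have hwy2 : ∀ w ∈ O, c w y ≠ red := by
          intro w hw h
          obtain ⟨hwS, hwv, _, hwxne, hwyne⟩ := hOmem w hw
          exact hP w hwS y hyS v hv x hxS hwyne hwv hwxne hyv (Ne.symm hxy) (Ne.symm hxv)
            ⟨by rw [h, hsym y v, hcvy], by rw [hsym y v, hcvy, hcvx]⟩
        have hwveq : ∀ w ∈ O, c w v = c w x := by
          intro w hw
          obtain ⟨hwS, hwv, hwvred, hwxne, hwyne⟩ := hOmem w hw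
          rcases hR w hwS v hv x hxS hwv hwxne (Ne.symm hxv) with h | h | h
          · exact h
          · exact absurd (h.trans hcvx) (by rw [hsym w v]; exact hwvred)
          · exact absurd (h.trans hcvx) (hwx w hw)
        have hinjO : Set.InjOn (fun w => c w v) O := by
          intro w1 h1 w2 h2 heq
          by_contra hne
          have hw1 := hOmem w1 (Finset.mem_coe.mp h1)
          have hw2 := hOmem w2 (Finset.mem_coe.mp h2)
          apply hP x hxS w1 hw1.1 v hv w2 hw2.1 (Ne.symm hw1.2.2.2.1) hxv (Ne.symm hw2.2.2.2.1)
            hw1.2.1 hne (Ne.symm hw2.2.1)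
          constructor
          · rw [hsym x w1, ← hwveq w1 (Finset.mem_coe.mp h1)]
          · rw [hsym v w2]; exact heq
        have hmapO : ∀ w ∈ O, c w v ∈ C.erase red := by
          intro w hw
          obtain ⟨hwS, hwv, hwvred, _, _⟩ := hOmem w hw
          refine Finset.mem_erase.mpr ⟨by rw [hsym w v]; exact hwvred, hmemC w hwS v hv hwv⟩
        have hOcard : O.card ≤ (C.erase red).card :=
          Finset.card_le_card_of_injOn _ hmapO hinjO
        have hOc : O.card = (S.erase v).card - L.card := Finset.card_sdiff_of_subset hLsub
        have h1 := Finset.card_erase_of_mem hv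
        have h2 : L.card ≤ (S.erase v).card := Finset.card_le_card hLsub
        have h3 := Finset.card_erase_of_mem hredC
        have h4 : 1 ≤ C.card := Finset.card_pos.mpr ⟨red, hredC⟩
        omega
    case neg =>
      push_neg at hA
      set O := (S.erase v) \ L with hOdef
      have hOmem : ∀ w ∈ O, w ∈ S ∧ w ≠ v ∧ c v w ≠ red ∧ w ∉ L := by
        intro w hw
        have h1 := Finset.mem_sdiff.mp hw
        have h2 := Finset.mem_erase.mp h1.1
        exact ⟨h2.2, h2.1, fun h => h1.2 (Finset.mem_filter.mpr ⟨h1.1, h⟩), h1.2⟩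
      have hwL : ∀ w ∈ O, ∀ x ∈ L, c w x ≠ red := by
        intro w hw x hx h
        obtain ⟨hwS, hwv, _, hwnL⟩ := hOmem w hw
        obtain ⟨hxS, hxv, hcvx⟩ := hLmem x hx
        obtain ⟨y, hy, hyx⟩ := Finset.exists_mem_ne hL1 x
        obtain ⟨hyS, hyv, hcvy⟩ := hLmem y hy
        have hwxne : w ≠ x := fun hh => hwnL (hh ▸ hx)
        have hwyne : w ≠ y := fun hh => hwnL (hh ▸ hy)
        exact hP w hwS x hxS v hv y hyS hwxne hwv hwyne hxv (Ne.symm hyx) (Ne.symm hyv)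
          ⟨by rw [h, hsym x v, hcvx], by rw [hsym x v, hcvx, hcvy]⟩
      have hwveq : ∀ w ∈ O, ∀ x ∈ L, c w v = c w x := by
        intro w hw x hx
        obtain ⟨hwS, hwv, hwvred, hwnL⟩ := hOmem w hw
        obtain ⟨hxS, hxv, hcvx⟩ := hLmem x hx
        have hwxne : w ≠ x := fun hh => hwnL (hh ▸ hx)
        rcases hR w hwS v hv x hxS hwv hwxne (Ne.symm hxv) with h | h | h
        · exact h
        · exact absurd (h.trans hcvx) (by rw [hsym w v]; exact hwvred)
        · exact absurd (h.trans hcvx) (hwL w hw x hx)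
      have hinjO : Set.InjOn (fun w => c w v) O := by
        intro w1 h1 w2 h2 heq
        by_contra hne
        have hw1 := hOmem w1 (Finset.mem_coe.mp h1)
        have hw2 := hOmem w2 (Finset.mem_coe.mp h2)
        obtain ⟨haS, hav, _⟩ := hLmem a haL
        have haw1 : a ≠ w1 := fun hh => hw1.2.2.2 (hh ▸ haL)
        have haw2 : a ≠ w2 := fun hh => hw2.2.2.2 (hh ▸ haL)
        apply hP a haS w1 hw1.1 v hv w2 hw2.1 haw1 hav haw2 hw1.2.1 hne (Ne.symm hw2.2.1)
        constructor
        · rw [hsym a w1, ← hwveq w1 (Finset.mem_coe.mp h1) a haL]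
        · rw [hsym v w2]; exact heq
      set CL := L.offDiag.image (fun p => c p.1 p.2) with hCLdef
      have hIH : L.card ≤ CL.card + 2 := by
        apply ih L ((Finset.ssubset_iff_of_subset hLS).mpr ⟨v, hv, hvL⟩)
        · intro a' ha' b' hb' d' hd' h1 h2 h3
          exact hR a' (hLS ha') b' (hLS hb') d' (hLS hd') h1 h2 h3
        · intro a' ha' b' hb' d' hd' e' he' h1 h2 h3 h4 h5 h6
          exact hP a' (hLS ha') b' (hLS hb') d' (hLS hd') e' (hLS he') h1 h2 h3 h4 h5 h6
      -- CL, image of O under g, and {red} are pairwise disjoint subsets of C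
      have hCLC : CL ⊆ C := by
        apply Finset.image_subset_image
        intro p hp
        have := Finset.mem_offDiag.mp hp
        exact Finset.mem_offDiag.mpr ⟨hLS this.1, hLS this.2.1, this.2.2⟩
      have hCLmem : ∀ i ∈ CL, ∃ x ∈ L, ∃ y ∈ L, x ≠ y ∧ c x y = i := by
        intro i hi
        obtain ⟨p, hp, hpe⟩ := Finset.mem_image.mp hi
        have := Finset.mem_offDiag.mp hp
        exact ⟨p.1, this.1, p.2, this.2.1, this.2.2, hpe⟩
      have hCLred : red ∉ CL := by
        intro h
        obtain ⟨x, hx, y, hy, hxy, hcxy⟩ := hCLmem red h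
        exact hA x hx y hy hxy hcxy
      have hCLg : ∀ w ∈ O, c w v ∉ CL := by
        intro w hw h
        obtain ⟨x, hx, y, hy, hxy, hcxy⟩ := hCLmem (c w v) h
        obtain ⟨hwS, hwv, _, hwnL⟩ := hOmem w hw
        obtain ⟨hxS, hxv, _⟩ := hLmem x hx
        obtain ⟨hyS, hyv, _⟩ := hLmem y hy
        have hxw : x ≠ w := fun hh => hwnL (hh ▸ hx)
        have hyw : y ≠ w := fun hh => hwnL (hh ▸ hy)
        apply hP x hxS y hyS w hwS v hv hxy hxw hxv hyw hyv hwv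
        constructor
        · rw [hcxy, hsym y w, ← hwveq w hw y hy]
        · rw [hsym y w, ← hwveq w hw y hy]
      have hgred : ∀ w ∈ O, c w v ≠ red := by
        intro w hw
        obtain ⟨_, _, hwvred, _⟩ := hOmem w hw
        rw [hsym w v]; exact hwvred
      -- counting
      have hOim : (O.image fun w => c w v).card = O.card :=
        Finset.card_image_of_injOn hinjO
      have hunion : (CL ∪ insert red (O.image fun w => c w v)) ⊆ C := by
        intro i hi
        rcases Finset.mem_union.mp hi with h | h
        · exact hCLC h
        · rcases Finset.mem_insert.mp h with rfl | h
          · exact hredC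
          · obtain ⟨w, hw, rfl⟩ := Finset.mem_image.mp h
            obtain ⟨hwS, hwv, _, _⟩ := hOmem w hw
            exact hmemC w hwS v hv hwv
      have hdisj : Disjoint CL (insert red (O.image fun w => c w v)) := by
        rw [Finset.disjoint_right]
        intro i hi hiCL
        rcases Finset.mem_insert.mp hi with rfl | h
        · exact hCLred hiCL
        · obtain ⟨w, hw, rfl⟩ := Finset.mem_image.mp h
          exact hCLg w hw hiCL
      have hrednotim : red ∉ (O.image fun w => c w v) := by
        intro h
        obtain ⟨w, hw, hh⟩ := Finset.mem_image.mp h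
        exact hgred w hw hh
      have hc1 : (CL ∪ insert red (O.image fun w => c w v)).card
          = CL.card + (O.card + 1) := by
        rw [Finset.card_union_of_disjoint hdisj, Finset.card_insert_of_notMem hrednotim, hOim]
      have hc2 : CL.card + (O.card + 1) ≤ C.card := by
        rw [← hc1]; exact Finset.card_le_card hunion
      have hOc : O.card = (S.erase v).card - L.card := Finset.card_sdiff_of_subset hLsub
      have h1 := Finset.card_erase_of_mem hv
      have h2 : L.card ≤ (S.erase v).card := Finset.card_le_card hLsub
      have h3 : 1 ≤ S.card := Finset.card_pos.mpr ⟨v, hv⟩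
      omega


theorem stmt8 (k : ℕ) (hk : 1 ≤ k) :
    IsLeast {n | ∀ c : Fin n → Fin n → Fin k, (∀ a b, c a b = c b a) →
      RainbowTri Full c ∨ MonoP4 Full c} (k + 3) := by
  constructor
  · -- membership: every coloring of K_{k+3} has rainbow triangle or mono P4
    intro c hsym
    by_contra hcon
    push_neg at hcon
    obtain ⟨hnR, hnP⟩ := hcon
    have hR : ∀ a ∈ (Finset.univ : Finset (Fin (k+3))), ∀ b ∈ Finset.univ, ∀ d ∈ Finset.univ,
        a ≠ b → a ≠ d → b ≠ d → c a b = c a d ∨ c a b = c b d ∨ c a d = c b d := by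
      intro a _ b _ d _ hab had hbd
      by_contra h
      push_neg at h
      exact hnR ⟨a, b, d, hab, had, hbd, h.1, h.2.1, h.2.2⟩
    have hP : ∀ a ∈ (Finset.univ : Finset (Fin (k+3))), ∀ b ∈ Finset.univ, ∀ d ∈ Finset.univ,
        ∀ e ∈ Finset.univ, a ≠ b → a ≠ d → a ≠ e → b ≠ d → b ≠ e → d ≠ e →
        ¬(c a b = c b d ∧ c b d = c d e) := by
      intro a _ b _ d _ e _ hab had hae hbd hbe hde ⟨h1, h2⟩
      exact hnP ⟨a, b, d, e, hab, had, hae, hbd, hbe, hde, hab, hbd, hde, h1, h2⟩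
    have hkey := key c hsym Finset.univ hR hP
    have h1 : (Finset.univ : Finset (Fin (k+3))).card = k + 3 := by simp
    have h2 : ((Finset.univ : Finset (Fin (k+3))).offDiag.image fun p => c p.1 p.2).card ≤ k := by
      have := Finset.card_le_univ ((Finset.univ : Finset (Fin (k+3))).offDiag.image
        fun p => c p.1 p.2)
      simpa using this
    omega
  · -- lower bound
    intro n hn
    by_contra hlt
    push_neg at hlt
    have hn2 : n ≤ k + 2 := by omega
    set c : Fin n → Fin n → Fin k :=
      fun a b => ⟨min (min a.val b.val) (k-1),
        lt_of_le_of_lt (min_le_right _ _) (by omega)⟩ with hcdef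
    have hsym : ∀ a b, c a b = c b a := by
      intro a b
      apply Fin.ext
      simp [hcdef, Nat.min_comm a.val b.val]; omega
    have hval : ∀ a b, (c a b).val = min (min a.val b.val) (k-1) := fun a b => rfl
    rcases hn c hsym with hrb | hmp
    · obtain ⟨a, b, d, hab, had, hbd, h1, h2, h3⟩ := hrb
      have h1' : (c a b).val ≠ (c a d).val := fun h => h1 (Fin.ext h)
      have h2' : (c a b).val ≠ (c b d).val := fun h => h2 (Fin.ext h)
      have h3' : (c a d).val ≠ (c b d).val := fun h => h3 (Fin.ext h)
      rw [hval, hval] at h1' h2' h3'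
      omega
    · obtain ⟨a, b, d, e, hab, had, hae, hbd, hbe, hde, _, _, _, h1, h2⟩ := hmp
      have h1' : (c a b).val = (c b d).val := congrArg Fin.val h1
      have h2' : (c b d).val = (c d e).val := congrArg Fin.val h2
      rw [hval, hval] at h1' h2'
      have hab' : a.val ≠ b.val := fun h => hab (Fin.ext h)
      have had' : a.val ≠ d.val := fun h => had (Fin.ext h)
      have hae' : a.val ≠ e.val := fun h => hae (Fin.ext h)
      have hbd' : b.val ≠ d.val := fun h => hbd (Fin.ext h)
      have hbe' : b.val ≠ e.val := fun h => hbe (Fin.ext h)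
      have hde' : d.val ≠ e.val := fun h => hde (Fin.ext h)
      have := a.isLt
      have := b.isLt
      have := d.isLt
      have := e.isLt
      omega
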